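/- Let R₁, R₂, Z₁, Z₂, π₁, π₂, p, Φ and A = {(α₁,α₂) : Φ([α₁]) = [α₂]} be as in the local model of a reducible deformation of a double curve, and set π = (π₁,π₂) ∈ A. Let Ā = {(ᾱ₁, ᾱ₂) ∈ R₁/(π₁^{p+1}) × R₂/(π₂^{p+1}) : Φ̄(ε(ᾱ₁)) = ε(ᾱ₂)}, where Φ̄ is the isomorphism R₁/((π₁^p Z₁)+(π₁^{p+1})) → R₂/((π₂^p Z₂)+(π₂^{p+1})) induced by Φ and ε denotes the natural quotient maps. Assume the conclusion of Proposition 3.1.4, i.e. every (u₁, u₂) ∈ A with π₁^{p+1} | u₁ and π₂^{p+1} | u₂ lies in πA. Then the natural projection A → Ā induces a ring isomorphism A/(π) ≅ Ā/(π). -/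

import Mathlib

set_option maxHeartbeats 1000000
set_option synthInstance.maxHeartbeats 400000


/-- Proposition 3.1.6 (localization): the natural projection `A → Ā` induces a ring
isomorphism `A/(π) ≅ Ā/(π)`, where `A` is the local model of a reducible deformation of a
double curve (pairs matching under `Φ`), and `Ā` is its image modulo `(π₁^{p+1}, π₂^{p+1})`
(pairs of classes matching under the induced isomorphism `Φ̄`).  We assume the conclusion of
Proposition 3.1.4: every element of `A` whose coordinates are divisible by `π₁^{p+1}`,
`π₂^{p+1}` lies in `π A`. -/
theorem stmt6 (R₁ R₂ : Type*) [CommRing R₁] [CommRing R₂]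
    (Z₁ : Ideal R₁) (Z₂ : Ideal R₂) (π₁ : R₁) (π₂ : R₂) (p : ℕ) (hp : 1 ≤ p)
    (Φ : (R₁ ⧸ (Ideal.span {π₁ ^ p} * Z₁)) ≃+* (R₂ ⧸ (Ideal.span {π₂ ^ p} * Z₂)))
    (hΦπ : Φ (Ideal.Quotient.mk _ π₁) = Ideal.Quotient.mk _ π₂)
    -- the isomorphism `Φ̄` induced by `Φ` on the quotients by `(π^p Z) + (π^{p+1})`:
    (Φbar : (R₁ ⧸ (Ideal.span {π₁ ^ p} * Z₁ ⊔ Ideal.span {π₁ ^ (p + 1)})) ≃+*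
            (R₂ ⧸ (Ideal.span {π₂ ^ p} * Z₂ ⊔ Ideal.span {π₂ ^ (p + 1)})))
    (hΦbar : ∀ (a₁ : R₁) (a₂ : R₂),
      Φ (Ideal.Quotient.mk _ a₁) = Ideal.Quotient.mk _ a₂ →
      Φbar (Ideal.Quotient.mk _ a₁) = Ideal.Quotient.mk _ a₂)
    -- the subring `A` of pairs matching under `Φ`:
    (A : Subring (R₁ × R₂))
    (hA : (A : Set (R₁ × R₂)) =
      {x | Φ (Ideal.Quotient.mk _ x.1) = Ideal.Quotient.mk _ x.2})
    (hπA : (π₁, π₂) ∈ A)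
    -- the subring `Ā` of pairs of classes mod `π_i^{p+1}` matching under `Φ̄`
    -- (`ε` being the natural quotient maps):
    (Abar : Subring ((R₁ ⧸ Ideal.span {π₁ ^ (p + 1)}) × (R₂ ⧸ Ideal.span {π₂ ^ (p + 1)})))
    (hAbar : (Abar : Set ((R₁ ⧸ Ideal.span {π₁ ^ (p + 1)}) × (R₂ ⧸ Ideal.span {π₂ ^ (p + 1)}))) = {x | ∃ (a₁ : R₁) (a₂ : R₂),
      Ideal.Quotient.mk _ a₁ = x.1 ∧ Ideal.Quotient.mk _ a₂ = x.2 ∧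
      Φbar (Ideal.Quotient.mk _ a₁) = Ideal.Quotient.mk _ a₂})
    (hπAbar : ((Ideal.Quotient.mk (Ideal.span {π₁ ^ (p + 1)}) π₁,
        Ideal.Quotient.mk (Ideal.span {π₂ ^ (p + 1)}) π₂)) ∈ Abar)
    -- conclusion of Proposition 3.1.4:
    (h314 : ∀ x : A, π₁ ^ (p + 1) ∣ (x : R₁ × R₂).1 → π₂ ^ (p + 1) ∣ (x : R₁ × R₂).2 →
      x ∈ Ideal.span {(⟨(π₁, π₂), hπA⟩ : A)})
    -- the natural projection `A → Ā`:
    (proj : ∀ x : A, ((Ideal.Quotient.mk (Ideal.span {π₁ ^ (p + 1)}) (x : R₁ × R₂).1),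
        (Ideal.Quotient.mk (Ideal.span {π₂ ^ (p + 1)}) (x : R₁ × R₂).2)) ∈ Abar) :
    ∃ e : (A ⧸ Ideal.span {(⟨(π₁, π₂), hπA⟩ : A)}) ≃+*
          (Abar ⧸ Ideal.span {(⟨_, hπAbar⟩ : Abar)}),
      ∀ x : A, e (Ideal.Quotient.mk _ x) = Ideal.Quotient.mk _ ⟨_, proj x⟩ := by

  classical
  set πA : A := ⟨(π₁, π₂), hπA⟩ with hπAdef
  set πB : Abar := ⟨_, hπAbar⟩ with hπBdef
  -- the projection as a ring hom
  let f : A →+* Abar :=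
    { toFun := fun x => ⟨(Ideal.Quotient.mk (Ideal.span {π₁ ^ (p + 1)}) (x : R₁ × R₂).1,
        Ideal.Quotient.mk (Ideal.span {π₂ ^ (p + 1)}) (x : R₁ × R₂).2), proj x⟩
      map_one' := Subtype.ext (Prod.ext (by simp) (by simp))
      map_mul' := fun x y => Subtype.ext (Prod.ext (by simp) (by simp))
      map_zero' := Subtype.ext (Prod.ext (by simp) (by simp))
      map_add' := fun x y => Subtype.ext (Prod.ext (by simp) (by simp)) }
  have hfπ : f πA = πB := rfl
  -- surjectivity of f
  have hfsurj : Function.Surjective f := by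
    rintro ⟨x, hx⟩
    have hx' : x ∈ (Abar : Set _) := hx
    rw [hAbar] at hx'
    obtain ⟨a₁, a₂, h1, h2, h3⟩ := hx'
    obtain ⟨c₂, hc₂⟩ := Ideal.Quotient.mk_surjective (Φ (Ideal.Quotient.mk _ a₁))
    have h4 : Φbar (Ideal.Quotient.mk _ a₁) = Ideal.Quotient.mk _ c₂ :=
      hΦbar a₁ c₂ hc₂.symm
    have h5 : a₂ - c₂ ∈ Ideal.span {π₂ ^ p} * Z₂ ⊔ Ideal.span {π₂ ^ (p + 1)} :=
      Ideal.Quotient.eq.mp (h3.symm.trans h4)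
    obtain ⟨z, hz, m, hm, hzm⟩ := Submodule.mem_sup.mp h5
    -- a₂' := c₂ + z = a₂ - m
    have hA' : (a₁, c₂ + z) ∈ A := by
      have : (a₁, c₂ + z) ∈ (A : Set (R₁ × R₂)) := by
        rw [hA]
        show Φ (Ideal.Quotient.mk _ a₁) = Ideal.Quotient.mk _ (c₂ + z)
        rw [map_add, hc₂]
        have : Ideal.Quotient.mk (Ideal.span {π₂ ^ p} * Z₂) z = 0 :=
          Ideal.Quotient.eq_zero_iff_mem.mpr hz
        rw [this, add_zero]
      exact this
    refine ⟨⟨(a₁, c₂ + z), hA'⟩, Subtype.ext (Prod.ext ?_ ?_)⟩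
    · exact h1
    · show Ideal.Quotient.mk (Ideal.span {π₂ ^ (p + 1)}) (c₂ + z) = x.2
      have hcz : c₂ + z = a₂ - m := by
        have := hzm
        linear_combination this
      rw [hcz, map_sub, Ideal.Quotient.eq_zero_iff_mem.mpr hm, sub_zero, h2]
  -- the composed map
  set g : A →+* (Abar ⧸ Ideal.span {πB}) :=
    (Ideal.Quotient.mk (Ideal.span {πB})).comp f with hgdef
  have hgπ : g πA = 0 := by
    rw [hgdef, RingHom.comp_apply, hfπ, Ideal.Quotient.eq_zero_iff_mem]
    exact Ideal.mem_span_singleton_self πB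
  have hle : Ideal.span {πA} ≤ RingHom.ker g := by
    rw [Ideal.span_le, Set.singleton_subset_iff]
    exact hgπ
  -- kernel characterization
  have hker : ∀ x : A, g x = 0 → x ∈ Ideal.span {πA} := by
    intro x hx
    rw [hgdef, RingHom.comp_apply, Ideal.Quotient.eq_zero_iff_mem,
      Ideal.mem_span_singleton] at hx
    obtain ⟨c, hc⟩ := hx
    obtain ⟨y, hy⟩ := hfsurj c
    have hfz : f (x - πA * y) = 0 := by
      rw [map_sub, map_mul, hfπ, hy, hc, sub_self]
    have h1 : π₁ ^ (p + 1) ∣ ((x - πA * y : A) : R₁ × R₂).1 := by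
      rw [← Ideal.mem_span_singleton, ← Ideal.Quotient.eq_zero_iff_mem]
      exact congrArg Prod.fst (congrArg Subtype.val hfz)
    have h2 : π₂ ^ (p + 1) ∣ ((x - πA * y : A) : R₁ × R₂).2 := by
      rw [← Ideal.mem_span_singleton, ← Ideal.Quotient.eq_zero_iff_mem]
      exact congrArg Prod.snd (congrArg Subtype.val hfz)
    have hmem := h314 (x - πA * y) h1 h2
    have : πA * y ∈ Ideal.span {πA} :=
      Ideal.mul_mem_right _ _ (Ideal.mem_span_singleton_self πA)
    have := Ideal.add_mem _ hmem this
    simpa using this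
  -- build the equivalence
  set e₀ := Ideal.Quotient.lift (Ideal.span {πA}) g (fun a ha => RingHom.mem_ker.mp (hle ha)) with he₀
  have hbij : Function.Bijective e₀ := by
    constructor
    · rw [injective_iff_map_eq_zero]
      intro a ha
      obtain ⟨x, rfl⟩ := Ideal.Quotient.mk_surjective a
      rw [he₀, Ideal.Quotient.lift_mk] at ha
      exact Ideal.Quotient.eq_zero_iff_mem.mpr (hker x ha)
    · intro z
      obtain ⟨w, rfl⟩ := Ideal.Quotient.mk_surjective z
      obtain ⟨x, hx⟩ := hfsurj w
      exact ⟨Ideal.Quotient.mk _ x, by rw [he₀, Ideal.Quotient.lift_mk,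
        hgdef, RingHom.comp_apply, hx]⟩
  refine ⟨RingEquiv.ofBijective e₀ hbij, fun x => ?_⟩
  show e₀ (Ideal.Quotient.mk _ x) = _
  rw [he₀, Ideal.Quotient.lift_mk]
  rfl
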